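/- Let 3 ≤ n ≤ m and let V be a dissipative quadratic stochastic operator on S^{m-1} with coefficients p_{ij,k} such that p_{11,1} = 1, p_{k+1,k+1,k} = 1 for k = 2,…,n−1, p_{22,n} = 1, and for every k with n+1 ≤ k ≤ m there is no i with p_{ii,k} = 1. Then the set of fixed points of V equals {x ∈ S^{m-1} : x₂ = x₃ = ⋯ = x_n and x_i = 0 for all i > n}; in particular V has infinitely many fixed points. -/
import Mathlib


open Finset Filter Topology

/-- `Majorizes y x` means `x ≺ y`: for every `k`, the sum of the `k` largest components of
`x` is at most the sum of the `k` largest components of `y`.  This is expressed via the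
standard equivalent form: every subset-sum of `x` is dominated by some subset-sum of `y`
over a subset of the same cardinality (the maximum of the latter over subsets of
cardinality `k` being exactly the sum of the `k` largest components of `y`). -/
def Majorizes {m : ℕ} (y x : Fin m → ℝ) : Prop :=
  ∀ A : Finset (Fin m), ∃ B : Finset (Fin m),
    B.card = A.card ∧ ∑ i ∈ A, x i ≤ ∑ i ∈ B, y i

/-- The quadratic operator `(Vx)_k = ∑_{i,j} p_{ij,k} x_i x_j` with heredity
coefficients `p`. -/
def QSO {m : ℕ} (p : Fin m → Fin m → Fin m → ℝ) (x : Fin m → ℝ) : Fin m → ℝ :=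
  fun k => ∑ i, ∑ j, p i j k * x i * x j

/-- Conditions on heredity coefficients: symmetry, nonnegativity, stochasticity. -/
def IsQSOCoeff {m : ℕ} (p : Fin m → Fin m → Fin m → ℝ) : Prop :=
  (∀ i j k, p i j k = p j i k) ∧ (∀ i j k, 0 ≤ p i j k) ∧ (∀ i j, ∑ k, p i j k = 1)

/-- Dissipativity of the q.s.o.: `V x ≻ x` for every `x` in the simplex. -/
def IsDissipative {m : ℕ} (p : Fin m → Fin m → Fin m → ℝ) : Prop :=
  ∀ x ∈ stdSimplex ℝ (Fin m), Majorizes (QSO p x) x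

/-- The `k`-th vertex of the simplex (the `k`-th standard basis vector). -/
def vertex {m : ℕ} (k : Fin m) : Fin m → ℝ := fun j => if j = k then 1 else 0

/-- The ω-limit set of the trajectory of `x` under `V`: the set of all limit points of
the sequence `(Vⁿ x)ₙ`. -/
def omegaLimitSet {m : ℕ} (V : (Fin m → ℝ) → Fin m → ℝ) (x : Fin m → ℝ) :
    Set (Fin m → ℝ) :=
  {y | ∃ φ : ℕ → ℕ, StrictMono φ ∧ Tendsto (fun n => V^[φ n] x) atTop (𝓝 y)}

section aux
variable {m : ℕ} {p : Fin m → Fin m → Fin m → ℝ}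

lemma p_le_one (hp : IsQSOCoeff p) (i j k : Fin m) : p i j k ≤ 1 := by
  rw [← hp.2.2 i j]
  exact Finset.single_le_sum (fun k _ => hp.2.1 i j k) (mem_univ k)

lemma sum_vertex (i : Fin m) : ∑ l, vertex i l = 1 := by
  simp [vertex]

lemma pair_mem_simplex {i j : Fin m} (a : ℝ) (ha : 0 ≤ a) (ha1 : a ≤ 1) :
    (fun l => a * vertex i l + (1 - a) * vertex j l) ∈ stdSimplex ℝ (Fin m) := by
  constructor
  · intro l
    dsimp only
    have h1 : (0:ℝ) ≤ vertex i l := by unfold vertex; positivity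
    have h2 : (0:ℝ) ≤ vertex j l := by unfold vertex; positivity
    nlinarith
  · rw [Finset.sum_add_distrib, ← Finset.mul_sum, ← Finset.mul_sum, sum_vertex, sum_vertex]
    ring

lemma qso_pair (hp : IsQSOCoeff p) {i j : Fin m} (hij : i ≠ j) (a : ℝ) (k : Fin m) :
    QSO p (fun l => a * vertex i l + (1-a) * vertex j l) k
      = a^2 * p i i k + (1-a)^2 * p j j k + (2*(a*(1-a))) * p i j k := by
  have hji : j ≠ i := hij.symm
  simp only [QSO, vertex, mul_add, add_mul, mul_ite, ite_mul, mul_one, mul_zero, one_mul,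
    zero_mul, Finset.sum_add_distrib, Finset.sum_ite_eq', mem_univ, if_true]
  rw [hp.1 j i k]
  ring

lemma max_coord (hd : IsDissipative p) {x : Fin m → ℝ} (hx : x ∈ stdSimplex ℝ (Fin m))
    (i : Fin m) : ∃ b : Fin m, x i ≤ QSO p x b := by
  obtain ⟨B, hB, hle⟩ := hd x hx {i}
  rw [Finset.card_singleton] at hB
  obtain ⟨b, rfl⟩ := Finset.card_eq_one.mp hB
  exact ⟨b, by simpa using hle⟩

end aux

section aux2
variable {m : ℕ} {p : Fin m → Fin m → Fin m → ℝ}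

lemma vertex_mem_simplex (i : Fin m) : vertex i ∈ stdSimplex ℝ (Fin m) := by
  refine ⟨fun l => ?_, sum_vertex i⟩
  unfold vertex; positivity

lemma qso_vertex (i k : Fin m) : QSO p (vertex i) k = p i i k := by
  simp only [QSO, vertex, mul_ite, ite_mul, mul_one, mul_zero, one_mul, zero_mul,
    Finset.sum_ite_eq', mem_univ, if_true]

lemma others_zero (hp : IsQSOCoeff p) {i j s : Fin m} (hs : p i j s = 1) :
    ∀ k, k ≠ s → p i j k = 0 := by
  intro k hk
  have h0 : ∑ l ∈ univ.erase s, p i j l = 0 := by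
    have := hp.2.2 i j
    rw [← Finset.add_sum_erase _ _ (mem_univ s), hs] at this
    linarith
  have := (Finset.sum_eq_zero_iff_of_nonneg (fun l _ => hp.2.1 i j l)).mp h0
  exact this k (Finset.mem_erase.mpr ⟨hk, mem_univ k⟩)

lemma sigma_exists {n : ℕ} (hp : IsQSOCoeff p) (hd : IsDissipative p)
    (hc3 : ∀ k : ℕ, n ≤ k → ∀ hk : k < m, ∀ i : Fin m, p i i ⟨k, hk⟩ ≠ 1) (i : Fin m) :
    ∃ s : Fin m, (s:ℕ) < n ∧ p i i s = 1 ∧ ∀ k, k ≠ s → p i i k = 0 := by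
  obtain ⟨b, hb⟩ := max_coord hd (vertex_mem_simplex i) i
  rw [qso_vertex] at hb
  have hb1 : vertex i i = 1 := by simp [vertex]
  rw [hb1] at hb
  have hpb : p i i b = 1 := le_antisymm (p_le_one hp i i b) hb
  refine ⟨b, ?_, hpb, others_zero hp hpb⟩
  by_contra h
  exact hc3 b.1 (by omega) b.2 i (by rw [Fin.eta]; exact hpb)

end aux2

section aux3
variable {m : ℕ} {p : Fin m → Fin m → Fin m → ℝ}

lemma ge_half_distinct (hp : IsQSOCoeff p) (hd : IsDissipative p) {i j s t : Fin m}
    (hij : i ≠ j) (hst : s ≠ t)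
    (hsi0 : ∀ k, k ≠ s → p i i k = 0) (htj0 : ∀ k, k ≠ t → p j j k = 0) :
    1/2 ≤ p i j s := by
  set z : Fin m → ℝ := fun l => (7/10) * vertex i l + (1-(7/10)) * vertex j l with hz
  have hzs : z ∈ stdSimplex ℝ (Fin m) := pair_mem_simplex _ (by norm_num) (by norm_num)
  obtain ⟨b, hb⟩ := max_coord hd hzs i
  have hzi : z i = 7/10 := by
    simp [hz, vertex, hij]
  rw [hzi, qso_pair hp hij] at hb
  by_cases hbs : b = s
  · rw [hbs] at hb
    have h1 : p i i s ≤ 1 := p_le_one hp i i s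
    have h2 : p j j s = 0 := htj0 s hst
    rw [h2] at hb
    nlinarith
  · have h1 : p i i b = 0 := hsi0 b hbs
    have h2 : p j j b ≤ 1 := p_le_one hp j j b
    have h3 : p i j b ≤ 1 := p_le_one hp i j b
    rw [h1] at hb
    nlinarith

lemma half_split (hp : IsQSOCoeff p) (hd : IsDissipative p) {i j s t : Fin m}
    (hij : i ≠ j) (hst : s ≠ t)
    (hsi0 : ∀ k, k ≠ s → p i i k = 0) (htj0 : ∀ k, k ≠ t → p j j k = 0) :
    p i j s = 1/2 ∧ p i j t = 1/2 ∧ ∀ k, k ≠ s → k ≠ t → p i j k = 0 := by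
  have h1 : 1/2 ≤ p i j s := ge_half_distinct hp hd hij hst hsi0 htj0
  have h2 : 1/2 ≤ p i j t := by
    have := ge_half_distinct hp hd hij.symm hst.symm htj0 hsi0
    rwa [hp.1 j i] at this
  have hsum : p i j s + p i j t ≤ 1 := by
    have hsub : ({s, t} : Finset (Fin m)) ⊆ univ := subset_univ _
    have := Finset.sum_le_sum_of_subset_of_nonneg hsub
      (fun k _ _ => hp.2.1 i j k)
    rw [Finset.sum_pair hst, hp.2.2 i j] at this
    exact this
  have hs : p i j s = 1/2 := by linarith
  have ht : p i j t = 1/2 := by linarith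
  refine ⟨hs, ht, ?_⟩
  have h0 : ∑ k ∈ univ \ {s, t}, p i j k = 0 := by
    have := hp.2.2 i j
    rw [← Finset.sum_sdiff (Finset.subset_univ {s,t}), Finset.sum_pair hst, hs, ht] at this
    linarith
  intro k hks hkt
  have := (Finset.sum_eq_zero_iff_of_nonneg (fun l _ => hp.2.1 i j l)).mp h0
  exact this k (by simp [hks, hkt])

lemma ge_half_equal (hp : IsQSOCoeff p) (hd : IsDissipative p) {i j s : Fin m}
    (hij : i ≠ j)
    (hsi0 : ∀ k, k ≠ s → p i i k = 0) (hsj0 : ∀ k, k ≠ s → p j j k = 0)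
    (hsi : p i i s = 1) (hsj : p j j s = 1) :
    1/2 ≤ p i j s := by
  by_contra h
  push_neg at h
  set q := p i j s with hq
  have hq0 : 0 ≤ q := hp.2.1 i j s
  set a : ℝ := (1 + 1/(2*(1-q)))/2 with ha
  have hqlt : 1 - q > 1/2 := by linarith
  have hu1 : 1/(2*(1-q)) < 1 := by
    rw [div_lt_one (by linarith)]; linarith
  have hu2 : (1:ℝ)/2 ≤ 1/(2*(1-q)) := by
    apply div_le_div_of_nonneg_left (by norm_num) (by linarith)
    nlinarith
  have ha1 : a < 1 := by rw [ha]; linarith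
  have ha2 : 1/2 < a := by rw [ha]; linarith
  have hkey : 2*a*(1-q) > 1 := by
    have : a > 1/(2*(1-q)) := by rw [ha]; linarith
    calc 2*a*(1-q) > 2*(1/(2*(1-q)))*(1-q) := by nlinarith
    _ = 1 := by field_simp
  set z : Fin m → ℝ := fun l => a * vertex i l + (1-a) * vertex j l with hz
  have hzs : z ∈ stdSimplex ℝ (Fin m) := pair_mem_simplex _ (by linarith) (by linarith)
  obtain ⟨b, hb⟩ := max_coord hd hzs i
  have hzi : z i = a := by simp [hz, vertex, hij]
  rw [hzi, qso_pair hp hij] at hb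
  by_cases hbs : b = s
  · rw [hbs] at hb
    rw [hsi, hsj, ← hq] at hb
    nlinarith
  · rw [hsi0 b hbs, hsj0 b hbs] at hb
    have h3 : p i j b ≤ 1 := p_le_one hp i j b
    have h4 : 0 ≤ p i j b := hp.2.1 i j b
    nlinarith

end aux3

section aux4
variable {m : ℕ} {p : Fin m → Fin m → Fin m → ℝ}

lemma qso_face (hp : IsQSOCoeff p) (hd : IsDissipative p) (σ : Fin m → Fin m)
    (hσ1 : ∀ i, p i i (σ i) = 1) (hσ0 : ∀ i, ∀ k, k ≠ σ i → p i i k = 0)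
    {x : Fin m → ℝ} (hx : x ∈ stdSimplex ℝ (Fin m))
    (hsupp : ∀ i j : Fin m, x i ≠ 0 → x j ≠ 0 → i ≠ j → σ i ≠ σ j) (k : Fin m) :
    QSO p x k = ∑ i, x i * (if σ i = k then 1 else 0) := by
  have hpt : ∀ i j : Fin m, p i j k * x i * x j
      = ((if σ i = k then (1:ℝ)/2 else 0) + (if σ j = k then (1:ℝ)/2 else 0)) * x i * x j := by
    intro i j
    by_cases hxi : x i = 0
    · simp [hxi]
    by_cases hxj : x j = 0
    · simp [hxj]
    by_cases hij : i = j
    · subst hij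
      have : p i i k = if σ i = k then 1 else 0 := by
        by_cases h : σ i = k
        · rw [if_pos h, ← h]; exact hσ1 i
        · rw [if_neg h]; exact hσ0 i k (fun hk => h hk.symm)
      rw [this]
      split <;> ring
    · have hσij := hsupp i j hxi hxj hij
      obtain ⟨h1, h2, h3⟩ := half_split hp hd hij hσij (hσ0 i) (hσ0 j)
      by_cases hk1 : σ i = k
      · by_cases hk2 : σ j = k
        · exact absurd (hk1.trans hk2.symm) hσij
        · rw [if_pos hk1, if_neg hk2, ← hk1, h1]; ring
      · by_cases hk2 : σ j = k
        · rw [if_neg hk1, if_pos hk2, ← hk2, h2]; ring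
        · rw [if_neg hk1, if_neg hk2,
            h3 k (fun hk => hk1 hk.symm) (fun hk => hk2 hk.symm)]
          ring
  unfold QSO
  simp_rw [hpt, add_mul, Finset.sum_add_distrib]
  have e1 : ∀ i : Fin m, ∑ j, (if σ i = k then (1:ℝ)/2 else 0) * x i * x j
      = (if σ i = k then (1:ℝ)/2 else 0) * x i := by
    intro i
    rw [← Finset.mul_sum, hx.2, mul_one]
  have e2 : ∀ i : Fin m, ∑ j, (if σ j = k then (1:ℝ)/2 else 0) * x i * x j
      = x i * ∑ j, (if σ j = k then (1:ℝ)/2 else 0) * x j := by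
    intro i
    rw [Finset.mul_sum]
    exact Finset.sum_congr rfl (fun j _ => by ring)
  simp_rw [e1, e2, ← Finset.sum_mul, hx.2, one_mul]
  rw [← Finset.sum_add_distrib]
  exact Finset.sum_congr rfl (fun i _ => by split <;> ring)

end aux4

section aux5
variable {m : ℕ} {p : Fin m → Fin m → Fin m → ℝ}

lemma tail_zero (hp : IsQSOCoeff p) (hd : IsDissipative p) {n : ℕ}
    (σ : Fin m → Fin m)
    (hσ1 : ∀ i, p i i (σ i) = 1) (hσ0 : ∀ i, ∀ k, k ≠ σ i → p i i k = 0)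
    (hσlt : ∀ i : Fin m, ((σ i : ℕ) < n))
    (hinj : ∀ i j : Fin m, (i:ℕ) < n → (j:ℕ) < n → i ≠ j → σ i ≠ σ j)
    {x : Fin m → ℝ} (hx : x ∈ stdSimplex ℝ (Fin m)) (hfix : QSO p x = x) :
    ∀ t : Fin m, n ≤ (t:ℕ) → x t = 0 := by
  classical
  set F : Finset (Fin m) := univ.filter (fun k : Fin m => n ≤ (k:ℕ)) with hF
  set χ : Fin m → ℝ := fun i => if n ≤ (i:ℕ) then 1 else 0 with hχ
  set T : ℝ := ∑ k ∈ F, x k with hT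
  have hTχ : T = ∑ k, x k * χ k := by
    rw [hT, hF, Finset.sum_filter]
    refine Finset.sum_congr rfl (fun k _ => ?_)
    simp only [hχ]
    by_cases h : n ≤ (k:ℕ) <;> simp [h]
  -- step 1 : T as double sum
  have h1 : T = ∑ i, ∑ j, (x i * x j) * (∑ k ∈ F, p i j k) := by
    have e0 : T = ∑ k ∈ F, QSO p x k :=
      Finset.sum_congr rfl (fun k _ => (congrFun hfix k).symm)
    rw [e0]
    unfold QSO
    rw [Finset.sum_comm]
    refine Finset.sum_congr rfl (fun i _ => ?_)
    rw [Finset.sum_comm]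
    refine Finset.sum_congr rfl (fun j _ => ?_)
    rw [Finset.mul_sum]
    exact Finset.sum_congr rfl (fun k _ => by ring)
  -- step 2 : bound on R i j
  have hzero : ∀ i j : Fin m, σ i ≠ σ j → i ≠ j → ∑ k ∈ F, p i j k = 0 := by
    intro i j hσij hij
    apply Finset.sum_eq_zero
    intro k hk
    rw [hF, Finset.mem_filter] at hk
    obtain ⟨-, -, h3⟩ := half_split hp hd hij hσij (hσ0 i) (hσ0 j)
    apply h3
    · intro hks; have := hσlt i; rw [hks] at hk; omega
    · intro hks; have := hσlt j; rw [hks] at hk; omega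
  have hR : ∀ i j : Fin m, (∑ k ∈ F, p i j k) ≤ (χ i + χ j - χ i * χ j)/2 := by
    intro i j
    have hrhs0 : (0:ℝ) ≤ (χ i + χ j - χ i * χ j)/2 := by
      simp only [hχ]; split <;> split <;> norm_num
    by_cases hij : i = j
    · subst hij
      have hz : ∑ k ∈ F, p i i k = 0 := by
        apply Finset.sum_eq_zero
        intro k hk
        rw [hF, Finset.mem_filter] at hk
        apply hσ0
        intro hks
        have := hσlt i
        rw [hks] at hk
        omega
      rw [hz]; exact hrhs0
    · by_cases hσij : σ i = σ j
      · -- then not both i j below n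
        have hnb : ¬((i:ℕ) < n ∧ (j:ℕ) < n) := by
          intro hlt
          exact hinj i j hlt.1 hlt.2 hij hσij
        have hrhs : (χ i + χ j - χ i * χ j)/2 = 1/2 := by
          simp only [hχ]
          rcases not_and_or.mp hnb with h | h <;> push_neg at h
          · rw [if_pos h]; split <;> ring
          · rw [if_pos h]; split <;> ring
        rw [hrhs]
        have hhalf : 1/2 ≤ p i j (σ i) := by
          apply ge_half_equal hp hd hij (hσ0 i)
          · rw [hσij]; exact hσ0 j
          · exact hσ1 i
          · rw [hσij]; exact hσ1 j
        have hsub : F ⊆ univ.erase (σ i) := by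
          intro k hk
          rw [hF, Finset.mem_filter] at hk
          refine Finset.mem_erase.mpr ⟨?_, mem_univ k⟩
          intro hks
          have := hσlt i
          rw [hks] at hk
          omega
        have hle : ∑ k ∈ F, p i j k ≤ ∑ k ∈ univ.erase (σ i), p i j k :=
          Finset.sum_le_sum_of_subset_of_nonneg hsub (fun k _ _ => hp.2.1 i j k)
        have herase : ∑ k ∈ univ.erase (σ i), p i j k = 1 - p i j (σ i) := by
          have := hp.2.2 i j
          rw [← Finset.add_sum_erase _ _ (mem_univ (σ i))] at this
          linarith
        rw [herase] at hle
        linarith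
      · rw [hzero i j hσij hij]; exact hrhs0
  -- step 3 : algebraic identity
  have h3 : ∑ i, ∑ j, (x i * x j) * ((χ i + χ j - χ i * χ j)/2) = T - T^2/2 := by
    have hpt : ∀ i j : Fin m, (x i * x j) * ((χ i + χ j - χ i * χ j)/2)
        = ((x i * χ i) * x j + x i * (x j * χ j) - (x i * χ i) * (x j * χ j))/2 := by
      intro i j; ring
    simp_rw [hpt]
    have inner : ∀ i : Fin m,
        ∑ j, ((x i * χ i) * x j + x i * (x j * χ j) - (x i * χ i) * (x j * χ j))/2
          = ((x i * χ i) + x i * T - (x i * χ i) * T)/2 := by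
      intro i
      rw [← Finset.sum_div, Finset.sum_sub_distrib, Finset.sum_add_distrib,
        ← Finset.mul_sum, ← Finset.mul_sum, ← Finset.mul_sum, hx.2, ← hTχ]
      ring
    simp_rw [inner]
    rw [← Finset.sum_div, Finset.sum_sub_distrib, Finset.sum_add_distrib,
      ← Finset.sum_mul, ← Finset.sum_mul, hx.2, ← hTχ]
    ring
  have hineq : T ≤ T - T^2/2 := by
    calc T = ∑ i, ∑ j, (x i * x j) * (∑ k ∈ F, p i j k) := h1
      _ ≤ ∑ i, ∑ j, (x i * x j) * ((χ i + χ j - χ i * χ j)/2) := by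
          refine Finset.sum_le_sum (fun i _ => Finset.sum_le_sum (fun j _ => ?_))
          exact mul_le_mul_of_nonneg_left (hR i j) (mul_nonneg (hx.1 i) (hx.1 j))
      _ = T - T^2/2 := h3
  have hT0 : T = 0 := by nlinarith [sq_nonneg T]
  intro t ht
  have hall := (Finset.sum_eq_zero_iff_of_nonneg
    (fun k (_ : k ∈ F) => hx.1 k)).mp hT0
  exact hall t (by rw [hF]; exact Finset.mem_filter.mpr ⟨mem_univ t, ht⟩)

end aux5

/-- Case 2(a): a dissipative q.s.o. with `p_{11,1} = 1`, a backward cycle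
on `{2,…,n}` (1-based: `p_{k+1,k+1,k} = 1` for `k = 2,…,n−1` and `p_{22,n} = 1`), and no
`i` with `p_{ii,k} = 1` for `k > n`, has fixed point set
`{x : x₂ = ⋯ = x_n, x_i = 0 for i > n}`, which is infinite.
(0-based indexing in the formalization.) -/
theorem stmt17 {m n : ℕ} (hn : 3 ≤ n) (hnm : n ≤ m)
    (p : Fin m → Fin m → Fin m → ℝ)
    (hp : IsQSOCoeff p) (hd : IsDissipative p)
    (hc0 : p ⟨0, by omega⟩ ⟨0, by omega⟩ ⟨0, by omega⟩ = 1)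
    (hc : ∀ j : ℕ, ∀ hj1 : 1 ≤ j, ∀ hj2 : j + 1 < n,
      p ⟨j + 1, by omega⟩ ⟨j + 1, by omega⟩ ⟨j, by omega⟩ = 1)
    (hc2 : p ⟨1, by omega⟩ ⟨1, by omega⟩ ⟨n - 1, by omega⟩ = 1)
    (hc3 : ∀ k : ℕ, n ≤ k → ∀ hk : k < m, ∀ i : Fin m, p i i ⟨k, hk⟩ ≠ 1) :
    {x ∈ stdSimplex ℝ (Fin m) | QSO p x = x} =
      {x ∈ stdSimplex ℝ (Fin m) |
        (∀ i j : Fin m, 1 ≤ (i : ℕ) → (i : ℕ) < n → 1 ≤ (j : ℕ) → (j : ℕ) < n →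
          x i = x j) ∧
        ∀ i : Fin m, n ≤ (i : ℕ) → x i = 0} ∧
    {x ∈ stdSimplex ℝ (Fin m) | QSO p x = x}.Infinite := by
  classical
  choose σ hσlt hσ1 hσ0 using fun i => sigma_exists (n := n) hp hd hc3 i
  -- explicit values of σ below n
  have hσeq : ∀ j : ℕ, ∀ hj : j < n,
      σ ⟨j, by omega⟩ = ⟨if j = 0 then 0 else if j = 1 then n - 1 else j - 1,
        by split_ifs <;> omega⟩ := by
    intro j hj
    have hkey : p (⟨j, by omega⟩ : Fin m) ⟨j, by omega⟩
        ⟨if j = 0 then 0 else if j = 1 then n - 1 else j - 1, by split_ifs <;> omega⟩ = 1 := by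
      by_cases h0 : j = 0
      · subst h0
        simpa using hc0
      · by_cases h1 : j = 1
        · subst h1
          simpa using hc2
        · have hfin : (⟨if j = 0 then 0 else if j = 1 then n - 1 else j - 1,
              by split_ifs <;> omega⟩ : Fin m) = ⟨j - 1, by omega⟩ :=
            Fin.ext (by simp [h0, h1])
          rw [hfin]
          have hkey2 := hc (j-1) (by omega) (by omega)
          convert hkey2 using 2 <;> exact Fin.ext (by simp; omega)
    by_contra hne
    have h0 := hσ0 ⟨j, by omega⟩ _ (fun h => hne h.symm)
    rw [h0] at hkey
    exact one_ne_zero hkey.symm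
  -- value form of hσeq
  have hσval : ∀ j : ℕ, ∀ hj : j < n, ((σ ⟨j, by omega⟩ : Fin m) : ℕ)
      = if j = 0 then 0 else if j = 1 then n - 1 else j - 1 :=
    fun j hj => by rw [hσeq j hj]
  have hσv : ∀ i : Fin m, (i:ℕ) < n → ((σ i : Fin m) : ℕ)
      = if (i:ℕ) = 0 then 0 else if (i:ℕ) = 1 then n - 1 else (i:ℕ) - 1 := by
    intro i hi
    have := hσval (i:ℕ) hi
    simpa only [Fin.eta] using this
  -- injectivity of σ below n
  have hinj : ∀ i j : Fin m, (i:ℕ) < n → (j:ℕ) < n → i ≠ j → σ i ≠ σ j := by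
    intro i j hi hj hij hss
    have e1 := hσv i hi
    have e2 := hσv j hj
    have hv : ((σ i : Fin m) : ℕ) = ((σ j : Fin m) : ℕ) := by rw [hss]
    rw [e1, e2] at hv
    have hij' : (i:ℕ) ≠ (j:ℕ) := fun h => hij (Fin.ext h)
    split_ifs at hv <;> omega
  -- face formula
  have hface : ∀ x ∈ stdSimplex ℝ (Fin m), (∀ t : Fin m, n ≤ (t:ℕ) → x t = 0) →
      ∀ k, QSO p x k = ∑ i, x i * (if σ i = k then 1 else 0) := by
    intro x hx hx0 k
    apply qso_face hp hd σ hσ1 hσ0 hx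
    intro i j hxi hxj hij
    have hi : (i:ℕ) < n := by
      by_contra h
      exact hxi (hx0 i (by omega))
    have hj : (j:ℕ) < n := by
      by_contra h
      exact hxj (hx0 j (by omega))
    exact hinj i j hi hj hij
  -- evaluation of the face sum
  have hsum : ∀ x : Fin m → ℝ, (∀ t : Fin m, n ≤ (t:ℕ) → x t = 0) →
      ∀ k : Fin m, ∀ hk : (k:ℕ) < n,
      ∑ i, x i * (if σ i = k then 1 else 0)
        = x ⟨if (k:ℕ) = 0 then 0 else if (k:ℕ) = n - 1 then 1 else (k:ℕ) + 1,
            by split_ifs <;> omega⟩ := by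
    intro x hx0 k hk
    set i₀ : Fin m := ⟨if (k:ℕ) = 0 then 0 else if (k:ℕ) = n - 1 then 1 else (k:ℕ) + 1,
      by split_ifs <;> omega⟩ with hi₀
    have hval : (i₀:ℕ) = if (k:ℕ) = 0 then 0 else if (k:ℕ) = n - 1 then 1 else (k:ℕ) + 1 := rfl
    have hi₀n : (i₀:ℕ) < n := by rw [hval]; split_ifs <;> omega
    rw [Finset.sum_eq_single i₀]
    · have hs : σ i₀ = k := by
        apply Fin.ext
        rw [hσv i₀ hi₀n]
        split_ifs at hval ⊢ <;> omega
      rw [if_pos hs, mul_one]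
    · intro b _ hbne
      by_cases hbn : (b:ℕ) < n
      · by_cases hσbk : σ b = k
        · exfalso
          apply hbne
          apply Fin.ext
          have hv : ((σ b : Fin m) : ℕ) = (k:ℕ) := by rw [hσbk]
          rw [hσv b hbn] at hv
          split_ifs at hv hval <;> omega
        · rw [if_neg hσbk, mul_zero]
      · rw [hx0 b (by omega), zero_mul]
    · intro h
      exact absurd (mem_univ i₀) h
  -- backward inclusion
  have hbwd : ∀ x ∈ stdSimplex ℝ (Fin m),
      (∀ i j : Fin m, 1 ≤ (i:ℕ) → (i:ℕ) < n → 1 ≤ (j:ℕ) → (j:ℕ) < n → x i = x j) →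
      (∀ i : Fin m, n ≤ (i:ℕ) → x i = 0) → QSO p x = x := by
    intro x hx hconst htail
    funext k
    rw [hface x hx htail k]
    by_cases hk : (k:ℕ) < n
    · rw [hsum x htail k hk]
      by_cases hk0 : (k:ℕ) = 0
      · exact congrArg x (Fin.ext (show (if (k:ℕ) = 0 then 0 else if (k:ℕ) = n - 1
          then 1 else (k:ℕ) + 1) = (k:ℕ) by split_ifs <;> omega))
      · refine hconst _ k ?_ ?_ (by omega) (by omega)
        · show 1 ≤ if (k:ℕ) = 0 then 0 else if (k:ℕ) = n - 1 then 1 else (k:ℕ) + 1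
          split_ifs <;> omega
        · show (if (k:ℕ) = 0 then 0 else if (k:ℕ) = n - 1 then 1 else (k:ℕ) + 1) < n
          split_ifs <;> omega
    · rw [htail k (by omega)]
      apply Finset.sum_eq_zero
      intro i _
      by_cases hσik : σ i = k
      · exfalso
        have := hσlt i
        rw [hσik] at this
        omega
      · rw [if_neg hσik, mul_zero]
  -- forward inclusion
  have hfwd : ∀ x ∈ stdSimplex ℝ (Fin m), QSO p x = x →
      ((∀ i j : Fin m, 1 ≤ (i:ℕ) → (i:ℕ) < n → 1 ≤ (j:ℕ) → (j:ℕ) < n → x i = x j) ∧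
        ∀ i : Fin m, n ≤ (i:ℕ) → x i = 0) := by
    intro x hx hfix
    have htail : ∀ t : Fin m, n ≤ (t:ℕ) → x t = 0 :=
      tail_zero hp hd σ hσ1 hσ0 hσlt hinj hx hfix
    have hrel : ∀ k : Fin m, ∀ hk : (k:ℕ) < n,
        x k = x ⟨if (k:ℕ) = 0 then 0 else if (k:ℕ) = n - 1 then 1 else (k:ℕ) + 1,
          by split_ifs <;> omega⟩ := by
      intro k hk
      conv_lhs => rw [← hfix]
      rw [hface x hx htail k, hsum x htail k hk]
    have hrelN : ∀ j : ℕ, ∀ hj : j < n, x ⟨j, by omega⟩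
        = x ⟨if j = 0 then 0 else if j = n - 1 then 1 else j + 1, by split_ifs <;> omega⟩ :=
      fun j hj => hrel ⟨j, by omega⟩ hj
    have hchain : ∀ j : ℕ, 1 ≤ j → ∀ hj : j < n, x ⟨j, by omega⟩ = x ⟨1, by omega⟩ := by
      intro j
      induction j with
      | zero => intro h; exact absurd h (by omega)
      | succ j ih =>
        intro h1 hj
        by_cases hj0 : j = 0
        · subst hj0; rfl
        · have hrec := ih (by omega) (by omega)
          have hr := hrelN j (by omega)
          have hfin : (⟨if j = 0 then 0 else if j = n - 1 then 1 else j + 1,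
              by split_ifs <;> omega⟩ : Fin m) = ⟨j + 1, by omega⟩ :=
            Fin.ext (show (if j = 0 then 0 else if j = n - 1 then 1 else j + 1) = j + 1
              by split_ifs <;> omega)
          rw [hfin] at hr
          exact hr.symm.trans hrec
    refine ⟨?_, htail⟩
    intro i j h1i h2i h1j h2j
    have e1 := hchain (i:ℕ) h1i h2i
    have e2 := hchain (j:ℕ) h1j h2j
    exact e1.trans e2.symm
  -- the set equality
  have hseteq : {x ∈ stdSimplex ℝ (Fin m) | QSO p x = x} =
      {x ∈ stdSimplex ℝ (Fin m) |
        (∀ i j : Fin m, 1 ≤ (i : ℕ) → (i : ℕ) < n → 1 ≤ (j : ℕ) → (j : ℕ) < n →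
          x i = x j) ∧
        ∀ i : Fin m, n ≤ (i : ℕ) → x i = 0} := by
    ext x
    simp only [Set.mem_setOf_eq]
    constructor
    · rintro ⟨hx, hfix⟩
      exact ⟨hx, hfwd x hx hfix⟩
    · rintro ⟨hx, h1, h2⟩
      exact ⟨hx, hbwd x hx h1 h2⟩
  refine ⟨hseteq, ?_⟩
  rw [hseteq]
  -- infinitude
  set A : ℝ := (n:ℝ) - 1 with hA
  have hA2 : (2:ℝ) ≤ A := by
    rw [hA]
    have : (3:ℝ) ≤ (n:ℝ) := by exact_mod_cast hn
    linarith
  have hApos : 0 < A := by linarith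
  set c : ℕ → ℝ := fun t => 1 / (A * ((t:ℝ) + 1)) with hcdef
  have hcpos : ∀ t : ℕ, 0 < c t := by
    intro t
    rw [hcdef]
    have : (0:ℝ) < (t:ℝ) + 1 := by positivity
    positivity
  have hAc : ∀ t : ℕ, A * c t = 1 / ((t:ℝ) + 1) := by
    intro t
    rw [hcdef]
    have h1 : ((t:ℝ) + 1) ≠ 0 := by positivity
    field_simp
  have hAcle : ∀ t : ℕ, A * c t ≤ 1 := by
    intro t
    rw [hAc t]
    rw [div_le_one (by positivity)]
    have : (0:ℝ) ≤ (t:ℝ) := Nat.cast_nonneg t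
    linarith
  set f : ℕ → Fin m → ℝ := fun t i =>
    if (i:ℕ) = 0 then 1 - A * c t else if (i:ℕ) < n then c t else 0 with hfdef
  refine Set.infinite_of_injective_forall_mem (f := f) ?_ ?_
  · -- injectivity
    intro t1 t2 h
    have h1 := congrFun h ⟨1, by omega⟩
    have hv : ((⟨1, by omega⟩ : Fin m) : ℕ) = 1 := rfl
    rw [hfdef] at h1
    simp only [hv] at h1
    rw [if_neg (by omega), if_pos (by omega), if_neg (by omega), if_pos (by omega)] at h1
    -- h1 : c t1 = c t2
    rw [hcdef] at h1
    simp only [] at h1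
    have ht1 : (0:ℝ) < (t1:ℝ) + 1 := by positivity
    have ht2 : (0:ℝ) < (t2:ℝ) + 1 := by positivity
    rw [div_eq_div_iff (by positivity) (by positivity)] at h1
    have : (t1:ℝ) = (t2:ℝ) := by nlinarith
    exact_mod_cast this
  · -- membership
    intro t
    have hfeval : ∀ i : Fin m, f t i =
        (if (i:ℕ) = 0 then (1 - A * c t) - c t else 0) + (if (i:ℕ) < n then c t else 0) := by
      intro i
      rw [hfdef]
      simp only []
      split_ifs <;> first | (exfalso; omega) | ring
    refine ⟨⟨?_, ?_⟩, ?_, ?_⟩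
    · -- nonneg
      intro i
      rw [hfdef]
      simp only []
      split_ifs
      · linarith [hAcle t]
      · exact le_of_lt (hcpos t)
      · exact le_refl 0
    · -- sum = 1
      rw [Finset.sum_congr rfl (fun i _ => hfeval i), Finset.sum_add_distrib]
      have e1 : ∑ i : Fin m, (if (i:ℕ) = 0 then (1 - A * c t) - c t else 0)
          = (1 - A * c t) - c t := by
        rw [Fin.sum_univ_eq_sum_range (fun j => if j = 0 then (1 - A * c t) - c t else 0) m]
        rw [Finset.sum_ite_eq' (Finset.range m) 0 (fun _ => (1 - A * c t) - c t)]
        rw [if_pos (Finset.mem_range.mpr (by omega))]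
      have e2 : ∑ i : Fin m, (if (i:ℕ) < n then c t else 0) = (n:ℝ) * c t := by
        rw [Fin.sum_univ_eq_sum_range (fun j => if j < n then c t else 0) m]
        rw [← Finset.sum_subset (Finset.range_subset_range.mpr hnm)
          (fun j _ hj => if_neg (fun hc' => hj (Finset.mem_range.mpr hc')))]
        rw [Finset.sum_congr rfl (fun j hj => if_pos (Finset.mem_range.mp hj))]
        rw [Finset.sum_const, Finset.card_range, nsmul_eq_mul]
      rw [e1, e2, hA]
      ring
    · -- constancy on [1, n)
      intro i j h1i h2i h1j h2j
      rw [hfdef]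
      simp only []
      rw [if_neg (by omega), if_pos h2i, if_neg (by omega), if_pos h2j]
    · -- tail zero
      intro i hi
      rw [hfdef]
      simp only []
      rw [if_neg (by omega), if_neg (by omega)]
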